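/- Parameter-derivative of a perturbed exponential: in a unital Banach algebra, for elements A, B, the map t ↦ e^{i(tA+B)} is differentiable with derivative (d/dt) e^{i(tA+B)} = i ∫₀¹ e^{is(tA+B)} A e^{i(1−s)(tA+B)} ds. -/

import Mathlib

open NormedSpace intervalIntegral MeasureTheory

lemma expR_hasDerivAt {𝔄 : Type*} [NormedRing 𝔄] [NormedAlgebra ℂ 𝔄] [CompleteSpace 𝔄] (Y : 𝔄) (s : ℝ) :
    HasDerivAt (fun s : ℝ => exp ((s : ℂ) • Y)) (Y * exp ((s : ℂ) • Y)) s :=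
by
  have := (hasDerivAt_exp_smul_const' Y (s : ℂ)).scomp s Complex.ofRealCLM.hasDerivAt
  simpa [Function.comp_def] using this

lemma expC_continuous {𝔄 : Type*} [NormedRing 𝔄] [NormedAlgebra ℂ 𝔄] [CompleteSpace 𝔄] :
    Continuous (exp : 𝔄 → 𝔄) :=
  continuous_iff_continuousAt.2 fun x => (exp_analytic (𝕂 := ℂ) x).continuousAt

lemma expR_continuous {𝔄 : Type*} [NormedRing 𝔄] [NormedAlgebra ℂ 𝔄] [CompleteSpace 𝔄] (Y : 𝔄) : Continuous (fun s : ℝ => exp ((s : ℂ) • Y)) :=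
  expC_continuous.comp ((Complex.continuous_ofReal).smul continuous_const)

/-- Duhamel integral identity. -/
lemma duhamel {𝔄 : Type*} [NormedRing 𝔄] [NormedAlgebra ℂ 𝔄] [CompleteSpace 𝔄] (X Y : 𝔄) :
    exp Y - exp X =
      ∫ s in (0:ℝ)..1,
        exp ((s : ℂ) • Y) * (Y - X) * exp (((1 - s : ℝ) : ℂ) • X) := by
  have hg : ∀ s ∈ Set.uIcc (0:ℝ) 1,
      HasDerivAt (fun s : ℝ => exp ((s : ℂ) • Y) * exp (((1 - s : ℝ) : ℂ) • X))
        (exp ((s : ℂ) • Y) * (Y - X) * exp (((1 - s : ℝ) : ℂ) • X)) s := by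
    intro s _
    have h1 := expR_hasDerivAt Y s
    have inner : HasDerivAt (fun s : ℝ => 1 - s) (-1) s := by
      simpa using (hasDerivAt_id s).const_sub 1
    have h2 : HasDerivAt (fun s : ℝ => exp (((1 - s : ℝ) : ℂ) • X))
        (-(X * exp (((1 - s : ℝ) : ℂ) • X))) s := by
      have h0 := (expR_hasDerivAt X (1 - s)).scomp s inner
      simp only [Function.comp_def, neg_smul, one_smul, smul_neg] at h0
      convert h0 using 2
    have hm := h1.mul h2
    convert hm using 1
    · rfl
    have hc : Commute Y (exp ((s : ℂ) • Y)) :=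
      ((Commute.refl Y).smul_right ((s : ℂ))).exp_right
    rw [mul_sub, sub_mul, ← hc.eq]
    noncomm_ring
  have hcont : Continuous (fun s : ℝ =>
      exp ((s : ℂ) • Y) * (Y - X) * exp (((1 - s : ℝ) : ℂ) • X)) := by
    apply Continuous.mul
    · exact (expR_continuous Y).mul continuous_const
    · exact expC_continuous.comp
        ((Complex.continuous_ofReal.comp (continuous_const.sub continuous_id)).smul
          continuous_const)
  have := intervalIntegral.integral_eq_sub_of_hasDerivAt hg
    (hcont.intervalIntegrable 0 1)
  rw [this]
  norm_num [exp_zero]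

/-- Parameter-derivative of a perturbed exponential in a unital Banach algebra:
`(d/dt) e^{i(tA+B)} = i ∫₀¹ e^{is(tA+B)} A e^{i(1−s)(tA+B)} ds`. -/
theorem stmt8 {𝔄 : Type*} [NormedRing 𝔄] [NormedAlgebra ℂ 𝔄] [CompleteSpace 𝔄]
    (A B : 𝔄) (t : ℝ) :
    HasDerivAt (fun t : ℝ => NormedSpace.exp (Complex.I • ((t : ℂ) • A + B)))
      (Complex.I •
        ∫ s in (0:ℝ)..1,
          NormedSpace.exp ((Complex.I * s) • ((t : ℂ) • A + B)) * A *
            NormedSpace.exp ((Complex.I * (1 - s)) • ((t : ℂ) • A + B))) t := by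
  set C : 𝔄 := Complex.I • A with hC
  set X : ℝ → 𝔄 := fun u => Complex.I • ((u : ℂ) • A + B) with hX
  set Φ : ℝ → 𝔄 := fun u => ∫ s in (0:ℝ)..1,
      exp ((s : ℂ) • X u) * C * exp (((1 - s : ℝ) : ℂ) • X t) with hΦ
  have hXdiff : ∀ u : ℝ, X u - X t = ((u - t : ℝ) : ℂ) • C := by
    intro u
    simp only [hX, hC, smul_add, smul_smul]
    push_cast
    module
  have hslope : ∀ u : ℝ, u ≠ t → slope (fun u : ℝ => exp (X u)) t u = Φ u := by
    intro u hu
    have hd := duhamel (X t) (X u)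
    rw [hXdiff u] at hd
    have heq : (fun s : ℝ => exp ((s:ℂ) • X u) * (((u - t : ℝ):ℂ) • C) *
          exp (((1 - s : ℝ):ℂ) • X t)) =
        fun s : ℝ => (u - t) • (exp ((s:ℂ) • X u) * C * exp (((1 - s : ℝ):ℂ) • X t)) := by
      funext s
      rw [mul_smul_comm, smul_mul_assoc, Complex.coe_smul]
    rw [heq, intervalIntegral.integral_smul] at hd
    rw [slope_def_module, hd, smul_smul, inv_mul_cancel₀ (sub_ne_zero.2 hu), one_smul]
  have hΦcont : Continuous Φ := by
    have hicc : Φ = fun u => ∫ s in Set.Icc (0:ℝ) 1,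
        exp ((s : ℂ) • X u) * C * exp (((1 - s : ℝ) : ℂ) • X t) := by
      funext u
      simp only [hΦ]
      rw [intervalIntegral.integral_of_le (by norm_num : (0:ℝ) ≤ 1),
        ← MeasureTheory.integral_Icc_eq_integral_Ioc]
    rw [hicc]
    apply continuous_parametric_integral_of_continuous _ isCompact_Icc
    have : Continuous fun p : ℝ × ℝ => exp ((p.2 : ℂ) • X p.1) := by
      apply expC_continuous.comp
      exact (Complex.continuous_ofReal.comp continuous_snd).smul
        (continuous_const.smul ((Complex.continuous_ofReal.comp continuous_fst).smul
          continuous_const |>.add continuous_const))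
    exact (this.mul continuous_const).mul
      ((expC_continuous.comp ((Complex.continuous_ofReal.comp
        (continuous_const.sub continuous_snd)).smul continuous_const)).comp
          (by fun_prop : Continuous fun p : ℝ × ℝ => p))
  have hkey : Φ t = Complex.I •
      ∫ s in (0:ℝ)..1,
        exp ((Complex.I * s) • ((t : ℂ) • A + B)) * A *
          exp ((Complex.I * (1 - s)) • ((t : ℂ) • A + B)) := by
    simp only [hΦ]
    rw [← intervalIntegral.integral_smul]
    apply intervalIntegral.integral_congr
    intro s _
    simp only [hX, hC, smul_smul]
    have e1 : ((s:ℂ) * Complex.I) = Complex.I * s := mul_comm _ _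
    have e2 : (((1 - s : ℝ):ℂ) * Complex.I) = Complex.I * (1 - (s:ℂ)) := by
      push_cast; ring
    rw [e1, e2, mul_smul_comm, smul_mul_assoc]
  rw [hasDerivAt_iff_tendsto_slope, ← hkey]
  refine Filter.Tendsto.congr' ?_ ((hΦcont.tendsto t).mono_left nhdsWithin_le_nhds)
  filter_upwards [eventually_mem_nhdsWithin] with u hu
  exact (hslope u hu).symm
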